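/- Let A ∈ ℤ^{m×n} with 1 ≤ m < n satisfy the regularity assumptions and let v = A·1. Then the translate P(A, v) − 1 of the knapsack polytope by the negative of the all-ones vector contains the (n−m)-dimensional central section [−1,1]^n ∩ ker_ℝ(A) of the cube [−1,1]^n, and consequently the (n−m)-dimensional volume of P(A, v) is at least 2^{n−m}. -/

import Mathlib

open scoped BigOperators
open Matrix

noncomputable section

/-- The real matrix obtained from an integer matrix. -/
def Rmat {m n : ℕ} (A : Matrix (Fin m) (Fin n) ℤ) : Matrix (Fin m) (Fin n) ℝ :=
  A.map (Int.cast : ℤ → ℝ)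

/-- The real vector obtained from an integer vector. -/
def Rvec {m : ℕ} (b : Fin m → ℤ) : Fin m → ℝ := fun i => (b i : ℝ)

/-- The knapsack polytope P(A,b) = {x ≥ 0 : A x = b}. -/
def knap {m n : ℕ} (A : Matrix (Fin m) (Fin n) ℤ) (b : Fin m → ℝ) : Set (Fin n → ℝ) :=
  {x | (∀ i, 0 ≤ x i) ∧ (Rmat A).mulVec x = b}

/-- The set F_s(A) of integer vectors b for which P(A,b) contains at least s integer points. -/
def feas {m n : ℕ} (s : ℕ) (A : Matrix (Fin m) (Fin n) ℤ) : Set (Fin m → ℤ) :=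
  {b | s ≤ Set.ncard {x : Fin n → ℤ | (∀ i, 0 ≤ x i) ∧ A.mulVec x = b}}

/-- The cone generated by the columns of A. -/
def coneOf {m n : ℕ} (A : Matrix (Fin m) (Fin n) ℤ) : Set (Fin m → ℝ) :=
  {y | ∃ x : Fin n → ℝ, (∀ i, 0 ≤ x i) ∧ (Rmat A).mulVec x = y}

/-- The generalized diagonal s-Frobenius number g_s(A, w). -/
def gDiag {m n : ℕ} (s : ℕ) (A : Matrix (Fin m) (Fin n) ℤ) (w : Fin m → ℝ) : ℝ :=
  sInf {t : ℝ | 0 ≤ t ∧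
    ∀ b : Fin m → ℤ, Rvec b ∈ interior ((fun c => t • w + c) '' coneOf A) → b ∈ feas s A}

/-- v = A·1 is the sum of the columns of A (as a real vector). -/
def vA {m n : ℕ} (A : Matrix (Fin m) (Fin n) ℤ) : Fin m → ℝ :=
  (Rmat A).mulVec (fun _ => 1)

/-- The diagonal s-Frobenius number g_s(A) = g_s(A, A·1). -/
def gFrob {m n : ℕ} (s : ℕ) (A : Matrix (Fin m) (Fin n) ℤ) : ℝ := gDiag s A (vA A)

/-- The regularity assumptions: the m×m minors of A have gcd 1, and the only
nonnegative real solution of A x = 0 is x = 0. -/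
def regular {m n : ℕ} (A : Matrix (Fin m) (Fin n) ℤ) : Prop :=
  Finset.univ.gcd (fun I : Fin m ↪ Fin n => (A.submatrix id ⇑I).det) = 1 ∧
  ∀ x : Fin n → ℝ, (∀ i, 0 ≤ x i) → (Rmat A).mulVec x = 0 → x = 0

/-- The s-covering radius of K with respect to L: the smallest μ > 0 such that every
point of the real span of L lies in y + μK for at least s distinct y ∈ L. -/
def muCov {N : ℕ} (s : ℕ) (K L : Set (Fin N → ℝ)) : ℝ :=
  sInf {μ : ℝ | 0 < μ ∧ ∀ x ∈ Submodule.span ℝ L,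
    ∃ T : Finset (Fin N → ℝ), ↑T ⊆ L ∧ s ≤ T.card ∧ ∀ y ∈ T, ∃ k ∈ K, x = y + μ • k}

/-- The set of absolute values of m×m minors of A. -/
def minorAbs {m n : ℕ} (A : Matrix (Fin m) (Fin n) ℤ) : Set ℤ :=
  {d | ∃ I : Fin m ↪ Fin n, d = |(A.submatrix id ⇑I).det|}

/-- m(A): the minimal absolute m×m minor of A. -/
def mMin {m n : ℕ} (A : Matrix (Fin m) (Fin n) ℤ) : ℤ := sInf (minorAbs A)

/-- M(A): the maximal absolute m×m minor of A. -/
def mMax {m n : ℕ} (A : Matrix (Fin m) (Fin n) ℤ) : ℤ := sSup (minorAbs A)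

/-- The lattice L_A^⊥ = {z ∈ ℤ^n : A z = 0}, viewed as a subset of ℝ^n. -/
def kerLat {m n : ℕ} (A : Matrix (Fin m) (Fin n) ℤ) : Set (Fin n → ℝ) :=
  {x | ∃ z : Fin n → ℤ, A.mulVec z = 0 ∧ x = Rvec z}

/-- √(det (A Aᵀ)). -/
def sqrtDet {m n : ℕ} (A : Matrix (Fin m) (Fin n) ℤ) : ℝ :=
  Real.sqrt (((A * Aᵀ).det : ℤ) : ℝ)

/-- The s-Frobenius number of a positive primitive integer vector. -/
def sFrob {n : ℕ} (s : ℕ) (a : Fin n → ℤ) : ℤ :=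
  sSup {b : ℤ | Set.ncard {x : Fin n → ℤ | (∀ i, 0 ≤ x i) ∧ ∑ i, a i * x i = b} < s}

/-- The full-rank lattice in ℝ^d with basis the columns of an invertible matrix B. -/
def latSet {d : ℕ} (B : Matrix (Fin d) (Fin d) ℝ) : Set (Fin d → ℝ) :=
  {x | ∃ z : Fin d → ℤ, x = B.mulVec (fun i => (z i : ℝ))}

/-- The absolute s-inhomogeneous minimum ϑ_s(K) = inf_L μ_s(K,L)/det(L)^{1/d}. -/
def theta (s d : ℕ) (K : Set (Fin d → ℝ)) : ℝ :=
  sInf {r : ℝ | ∃ B : Matrix (Fin d) (Fin d) ℝ, B.det ≠ 0 ∧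
    r = muCov s K (latSet B) / |B.det| ^ ((1 : ℝ) / d)}

/-- The standard simplex S_d ⊂ ℝ^d. -/
def stdSimplex' (d : ℕ) : Set (Fin d → ℝ) :=
  {x | (∀ i, 0 ≤ x i) ∧ ∑ i, x i ≤ 1}

open MeasureTheory

section AuxAll
open MeasureTheory Set Pointwise
open scoped NNReal ENNReal



section AuxPL

lemma compact_sumset {K L : Set ℝ} (hK : IsCompact K) (hL : IsCompact L)
    (hK0 : K.Nonempty) (hL0 : L.Nonempty) :
    volume K + volume L ≤ volume (K + L) := by
  set a := sSup K with ha
  set b := sInf L with hb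
  have haK : a ∈ K := hK.sSup_mem hK0
  have hbL : b ∈ L := hL.sInf_mem hL0
  set U : Set ℝ := (fun x => x + b) '' K with hU
  set V : Set ℝ := (fun y => a + y) '' L with hV
  have hUsub : U ⊆ K + L := by
    rintro _ ⟨k, hk, rfl⟩; exact Set.add_mem_add hk hbL
  have hVsub : V ⊆ K + L := by
    rintro _ ⟨l, hl, rfl⟩; exact Set.add_mem_add haK hl
  have hUV : U ∩ V ⊆ {a + b} := by
    rintro z ⟨⟨k, hk, rfl⟩, ⟨l, hl, hz⟩⟩
    have hka : k ≤ a := le_csSup hK.bddAbove hk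
    have hbl : b ≤ l := csInf_le hL.bddBelow hl
    have h1 : k + b ≤ a + b := by linarith
    have h2 : a + b ≤ a + l := by linarith
    simp only [Set.mem_singleton_iff]
    show k + b = a + b
    refine le_antisymm h1 ?_
    calc a + b ≤ a + l := h2
      _ = k + b := hz
  have hVmeas : MeasurableSet V :=
    ((Homeomorph.addLeft a).isCompact_image.2 hL).measurableSet
  have hvolU : volume U = volume K := by
    rw [hU, show (fun x : ℝ => x + b) '' K = (fun x : ℝ => x + -b) ⁻¹' K by
      ext x; simp [Set.mem_preimage, neg_add_eq_sub, sub_eq_iff_eq_add]]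
    exact measure_preimage_add_right volume (-b) K
  have hvolV : volume V = volume L := by
    rw [hV, show (fun y : ℝ => a + y) '' L = (fun y : ℝ => -a + y) ⁻¹' L by
      ext x
      simp only [Set.mem_image, Set.mem_preimage]
      constructor
      · rintro ⟨l, hl, rfl⟩; simpa using hl
      · intro h; exact ⟨-a + x, h, by ring⟩]
    exact measure_preimage_add volume (-a) L
  calc volume K + volume L = volume U + volume V := by rw [hvolU, hvolV]
    _ = volume (U ∪ V) + volume (U ∩ V) := (measure_union_add_inter U hVmeas).symm
    _ ≤ volume (K + L) + volume {a + b} :=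
        add_le_add (measure_mono (Set.union_subset hUsub hVsub)) (measure_mono hUV)
    _ = volume (K + L) := by simp [Real.volume_singleton]

lemma sumset_vol {A B : Set ℝ} (hA : MeasurableSet A) (hB : MeasurableSet B)
    (hA0 : A.Nonempty) (hB0 : B.Nonempty) :
    volume A + volume B ≤ volume (A + B) := by
  obtain ⟨a0, ha0⟩ := hA0
  obtain ⟨b0, hb0⟩ := hB0
  by_cases hAinf : volume A = ⊤
  · have : volume (A + B) = ⊤ := by
      refine top_unique ?_
      calc (⊤ : ENNReal) = volume A := hAinf.symm
        _ = volume ((fun x : ℝ => x + -b0) ⁻¹' A) := (measure_preimage_add_right volume (-b0) A).symm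
        _ = volume ((fun x : ℝ => x + b0) '' A) := by
            congr 1; ext x; simp [Set.mem_preimage, neg_add_eq_sub, sub_eq_iff_eq_add]
        _ ≤ volume (A + B) := by
            apply measure_mono; rintro _ ⟨x, hx, rfl⟩; exact Set.add_mem_add hx hb0
    simp [this]
  by_cases hBinf : volume B = ⊤
  · have : volume (A + B) = ⊤ := by
      refine top_unique ?_
      calc (⊤ : ENNReal) = volume B := hBinf.symm
        _ = volume ((fun x : ℝ => -a0 + x) ⁻¹' B) := (measure_preimage_add volume (-a0) B).symm
        _ = volume ((fun x : ℝ => a0 + x) '' B) := by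
            congr 1; ext x
            simp only [Set.mem_image, Set.mem_preimage]
            constructor
            · rintro h; exact ⟨-a0 + x, h, by ring⟩
            · rintro ⟨y, hy, rfl⟩; simpa using hy
        _ ≤ volume (A + B) := by
            apply measure_mono; rintro _ ⟨x, hx, rfl⟩; exact Set.add_mem_add ha0 hx
    simp [this]
  refine ENNReal.le_of_forall_pos_le_add fun ε hε hfin => ?_
  have hε2 : ((ε : ENNReal) / 2) ≠ 0 := by
    simp [ENNReal.div_eq_zero_iff]
    exact_mod_cast hε.ne'
  obtain ⟨K, hKA, hKc, hKv⟩ := hA.exists_isCompact_lt_add hAinf hε2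
  obtain ⟨L, hLB, hLc, hLv⟩ := hB.exists_isCompact_lt_add hBinf hε2
  have hKc' : IsCompact (K ∪ {a0}) := hKc.union isCompact_singleton
  have hLc' : IsCompact (L ∪ {b0}) := hLc.union isCompact_singleton
  have hKA' : K ∪ {a0} ⊆ A := Set.union_subset hKA (by simpa using ha0)
  have hLB' : L ∪ {b0} ⊆ B := Set.union_subset hLB (by simpa using hb0)
  have key := compact_sumset hKc' hLc' ⟨a0, by simp⟩ ⟨b0, by simp⟩
  calc volume A + volume B ≤ (volume K + ε / 2) + (volume L + ε / 2) := by
        exact add_le_add hKv.le hLv.le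
    _ = volume K + volume L + ε := by rw [add_add_add_comm, ENNReal.add_halves]
    _ ≤ volume (K ∪ {a0}) + volume (L ∪ {b0}) + ε :=
        add_le_add (add_le_add (measure_mono (by simp)) (measure_mono (by simp))) le_rfl
    _ ≤ volume ((K ∪ {a0}) + (L ∪ {b0})) + ε := add_le_add_left key ε
    _ ≤ volume (A + B) + ε :=
        add_le_add_left (measure_mono (Set.add_subset_add hKA' hLB')) ε


lemma oneDim_BM {t : ℝ} (h0 : 0 < t) (h1 : t < 1) {A B : Set ℝ}
    (hA : MeasurableSet A) (hB : MeasurableSet B) (hA0 : A.Nonempty) (hB0 : B.Nonempty) :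
    ENNReal.ofReal (1 - t) * volume A + ENNReal.ofReal t * volume B
      ≤ volume ((1 - t) • A + t • B) := by
  have h1t : (0:ℝ) < 1 - t := by linarith
  have hA' : MeasurableSet ((1 - t) • A) := hA.const_smul₀ (1 - t)
  have hB' : MeasurableSet (t • B) := hB.const_smul₀ t
  have hvA : volume ((1 - t) • A) = ENNReal.ofReal (1 - t) * volume A := by
    rw [Measure.addHaar_smul]
    congr 1
    rw [Module.finrank_self, pow_one, abs_of_pos h1t]
  have hvB : volume (t • B) = ENNReal.ofReal t * volume B := by
    rw [Measure.addHaar_smul]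
    congr 1
    rw [Module.finrank_self, pow_one, abs_of_pos h0]
  rw [← hvA, ← hvB]
  exact sumset_vol hA' hB' (hA0.smul_set) (hB0.smul_set)

lemma amgm2 {t : ℝ} (h0 : 0 ≤ t) (h1 : t ≤ 1) (a b : ℝ≥0∞) :
    a ^ (1 - t) * b ^ t ≤ ENNReal.ofReal (1 - t) * a + ENNReal.ofReal t * b := by
  rcases eq_or_lt_of_le h1 with rfl | h1'
  · simp
  rcases eq_or_lt_of_le h0 with rfl | h0'
  · simp
  have h1t : (0:ℝ) < 1 - t := by linarith
  rcases eq_or_ne a ⊤ with rfl | ha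
  · have : ENNReal.ofReal (1 - t) * ⊤ = ⊤ := by
      rw [ENNReal.mul_top]
      simp [ENNReal.ofReal_eq_zero]; linarith
    rw [this]; exact le_top.trans_eq (by simp)
  rcases eq_or_ne b ⊤ with rfl | hb
  · have : ENNReal.ofReal t * ⊤ = ⊤ := by
      rw [ENNReal.mul_top]
      simp [ENNReal.ofReal_eq_zero]; linarith
    rw [this]; simp
  lift a to NNReal using ha
  lift b to NNReal using hb
  rw [← ENNReal.coe_rpow_of_nonneg a h1t.le, ← ENNReal.coe_rpow_of_nonneg b h0,
    ENNReal.ofReal, ENNReal.ofReal, ← ENNReal.coe_mul, ← ENNReal.coe_mul, ← ENNReal.coe_mul,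
    ← ENNReal.coe_add, ENNReal.coe_le_coe]
  have hw : (1 - t).toNNReal + t.toNNReal = 1 := by
    ext; push_cast [Real.coe_toNNReal _ h1t.le, Real.coe_toNNReal _ h0]; ring
  have := NNReal.geom_mean_le_arith_mean2_weighted _ _ a b hw
  calc a ^ (1 - t) * b ^ t
      = a ^ ((1 - t).toNNReal : ℝ) * b ^ ((t.toNNReal : ℝ)) := by
        rw [Real.coe_toNNReal _ h1t.le, Real.coe_toNNReal _ h0]
    _ ≤ (1 - t).toNNReal * a + t.toNNReal * b := this

lemma layer_repr {φ : ℝ → ℝ≥0∞} (hφ : Measurable φ) (hφ1 : ∀ x, φ x ≤ 1) :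
    ∫⁻ x, φ x = ∫⁻ s in Ioo (0:ℝ) 1, volume {x | ENNReal.ofReal s < φ x} := by
  have hne : ∀ x, φ x ≠ ⊤ := fun x => ((hφ1 x).trans_lt (by simp)).ne
  have h1 : ∫⁻ x, φ x = ∫⁻ x, ENNReal.ofReal ((φ x).toReal) := by
    exact lintegral_congr fun x => (ENNReal.ofReal_toReal (hne x)).symm
  rw [h1, lintegral_eq_lintegral_meas_lt volume
      (Filter.Eventually.of_forall fun x => ENNReal.toReal_nonneg)
      (hφ.ennreal_toReal.aemeasurable)]
  have hsets : ∀ s ∈ Ioi (0:ℝ),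
      volume {a : ℝ | s < (φ a).toReal} = volume {x | ENNReal.ofReal s < φ x} := by
    intro s hs
    congr 1
    ext x
    simp only [Set.mem_setOf_eq]
    rw [← ENNReal.ofReal_lt_iff_lt_toReal (le_of_lt hs) (hne x)]
  rw [setLIntegral_congr_fun measurableSet_Ioi hsets]
  have hsplit : Ioi (0:ℝ) = Ioo (0:ℝ) 1 ∪ Ici (1:ℝ) := by
    ext x
    simp only [mem_Ioi, mem_Ioo, mem_Ici, mem_union]
    constructor
    · intro hx
      rcases lt_or_ge x 1 with h | h
      · exact Or.inl ⟨hx, h⟩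
      · exact Or.inr h
    · rintro (⟨h, _⟩ | h) <;> linarith
  have hdisj : Disjoint (Ioo (0:ℝ) 1) (Ici (1:ℝ)) := by
    rw [Set.disjoint_left]
    rintro x ⟨_, h2⟩ h3
    simp only [mem_Ici] at h3
    linarith
  rw [hsplit, lintegral_union measurableSet_Ici hdisj]
  have hzero : ∀ s ∈ Ici (1:ℝ),
      volume {x : ℝ | ENNReal.ofReal s < φ x} = (fun _ : ℝ => (0:ℝ≥0∞)) s := by
    intro s hs
    simp only
    convert measure_empty
    · ext x
      simp only [mem_setOf_eq, mem_empty_iff_false, iff_false, not_lt]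
      exact (hφ1 x).trans (ENNReal.one_le_ofReal.mpr hs)
    · infer_instance
  rw [setLIntegral_congr_fun measurableSet_Ici hzero]
  simp

lemma PL1_aux {t : ℝ} (h0 : 0 < t) (h1 : t < 1) (f g h : ℝ → ℝ≥0∞)
    (hf : Measurable f) (hg : Measurable g) (hh : Measurable h)
    (hf1 : ∀ x, f x ≤ 1) (hg1 : ∀ x, g x ≤ 1) (hh1 : ∀ x, h x ≤ 1)
    (hfs : ⨆ x, f x = 1) (hgs : ⨆ x, g x = 1)
    (hyp : ∀ x y, f x ^ (1 - t) * g y ^ t ≤ h ((1 - t) * x + t * y)) :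
    ENNReal.ofReal (1 - t) * (∫⁻ x, f x) + ENNReal.ofReal t * (∫⁻ x, g x) ≤ ∫⁻ x, h x := by
  have h1t : (0:ℝ) < 1 - t := by linarith
  rw [layer_repr hf hf1, layer_repr hg hg1, layer_repr hh hh1]
  set F := fun s : ℝ => volume {x | ENNReal.ofReal s < f x} with hF
  set G := fun s : ℝ => volume {x | ENNReal.ofReal s < g x} with hG
  set H := fun s : ℝ => volume {x | ENNReal.ofReal s < h x} with hH
  have key : ∀ s ∈ Ioo (0:ℝ) 1,
      ENNReal.ofReal (1 - t) * F s + ENNReal.ofReal t * G s ≤ H s := by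
    intro s hs
    obtain ⟨hs0, hs1⟩ := hs
    have hsne : ENNReal.ofReal s ≠ 0 := by
      simp [ENNReal.ofReal_eq_zero]; linarith
    have hsnetop : ENNReal.ofReal s ≠ ⊤ := ENNReal.ofReal_ne_top
    -- nonempty level sets
    have hFne : {x | ENNReal.ofReal s < f x}.Nonempty := by
      have : ENNReal.ofReal s < ⨆ x, f x := by
        rw [hfs]; exact ENNReal.ofReal_lt_one.mpr hs1
      obtain ⟨x, hx⟩ := lt_iSup_iff.mp this
      exact ⟨x, hx⟩
    have hGne : {x | ENNReal.ofReal s < g x}.Nonempty := by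
      have : ENNReal.ofReal s < ⨆ x, g x := by
        rw [hgs]; exact ENNReal.ofReal_lt_one.mpr hs1
      obtain ⟨x, hx⟩ := lt_iSup_iff.mp this
      exact ⟨x, hx⟩
    have hFm : MeasurableSet {x | ENNReal.ofReal s < f x} :=
      measurableSet_lt measurable_const hf
    have hGm : MeasurableSet {x | ENNReal.ofReal s < g x} :=
      measurableSet_lt measurable_const hg
    have hsub : (1 - t) • {x | ENNReal.ofReal s < f x} + t • {x | ENNReal.ofReal s < g x}
        ⊆ {x | ENNReal.ofReal s < h x} := by
      rintro z ⟨u, hu, v, hv, rfl⟩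
      obtain ⟨x, hx, rfl⟩ := hu
      obtain ⟨y, hy, rfl⟩ := hv
      simp only [mem_setOf_eq] at hx hy ⊢
      have e1 : ENNReal.ofReal s = (ENNReal.ofReal s) ^ (1 - t) * (ENNReal.ofReal s) ^ t := by
        rw [← ENNReal.rpow_add _ _ hsne hsnetop, sub_add_cancel, ENNReal.rpow_one]
      have e2 : (ENNReal.ofReal s) ^ (1 - t) * (ENNReal.ofReal s) ^ t
          < f x ^ (1 - t) * (ENNReal.ofReal s) ^ t := by
        exact ENNReal.mul_lt_mul_left (by
            exact (ENNReal.rpow_pos (lt_of_le_of_ne zero_le (Ne.symm hsne)) hsnetop).ne')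
          (ENNReal.rpow_ne_top_of_nonneg h0.le hsnetop) (ENNReal.rpow_lt_rpow hx h1t)
      have e3 : f x ^ (1 - t) * (ENNReal.ofReal s) ^ t ≤ f x ^ (1 - t) * g y ^ t :=
        mul_le_mul_right (ENNReal.rpow_le_rpow hy.le h0.le) _
      calc ENNReal.ofReal s
          = (ENNReal.ofReal s) ^ (1 - t) * (ENNReal.ofReal s) ^ t := e1
        _ < f x ^ (1 - t) * (ENNReal.ofReal s) ^ t := e2
        _ ≤ f x ^ (1 - t) * g y ^ t := e3
        _ ≤ h ((1 - t) * x + t * y) := hyp x y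
        _ = h ((1 - t) • x + t • y) := by norm_num
    calc ENNReal.ofReal (1 - t) * F s + ENNReal.ofReal t * G s
        ≤ volume ((1 - t) • {x | ENNReal.ofReal s < f x} + t • {x | ENNReal.ofReal s < g x}) :=
          oneDim_BM h0 h1 hFm hGm hFne hGne
      _ ≤ H s := measure_mono hsub
  -- measurability of F and G (they are antitone)
  have hFanti : Antitone F := by
    intro s1 s2 hs
    exact measure_mono fun x hx => lt_of_le_of_lt (ENNReal.ofReal_le_ofReal hs) hx
  have hGanti : Antitone G := by
    intro s1 s2 hs
    exact measure_mono fun x hx => lt_of_le_of_lt (ENNReal.ofReal_le_ofReal hs) hx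
  calc ENNReal.ofReal (1 - t) * (∫⁻ s in Ioo (0:ℝ) 1, F s)
        + ENNReal.ofReal t * (∫⁻ s in Ioo (0:ℝ) 1, G s)
      = ∫⁻ s in Ioo (0:ℝ) 1, (ENNReal.ofReal (1 - t) * F s + ENNReal.ofReal t * G s) := by
        rw [lintegral_add_left (by exact (hFanti.measurable.const_mul _))]
        rw [lintegral_const_mul _ hFanti.measurable, lintegral_const_mul _ hGanti.measurable]
    _ ≤ ∫⁻ s in Ioo (0:ℝ) 1, H s := by
        refine setLIntegral_mono' measurableSet_Ioo ?_
        intro s hs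
        exact key s hs

lemma div_mul_div_ennreal (a c : ℝ≥0∞) {b d : ℝ≥0∞} (hb0 : b ≠ 0) (hbt : b ≠ ⊤)
    (hd0 : d ≠ 0) (hdt : d ≠ ⊤) : a / b * (c / d) = a * c / (b * d) := by
  rw [div_eq_mul_inv, div_eq_mul_inv, div_eq_mul_inv, ENNReal.mul_inv (Or.inl hb0) (Or.inr hd0)]
  ring

lemma PL1_bounded {t : ℝ} (h0 : 0 < t) (h1 : t < 1) (f g h : ℝ → ℝ≥0∞)
    (hf : Measurable f) (hg : Measurable g) (hh : Measurable h) {F G : ℝ≥0∞}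
    (hfF : ∀ x, f x ≤ F) (hgG : ∀ x, g x ≤ G) (hFt : F ≠ ⊤) (hGt : G ≠ ⊤)
    (hF0 : (⨆ x, f x) ≠ 0) (hG0 : (⨆ x, g x) ≠ 0)
    (hyp : ∀ x y, f x ^ (1 - t) * g y ^ t ≤ h ((1 - t) * x + t * y)) :
    (∫⁻ x, f x) ^ (1 - t) * (∫⁻ x, g x) ^ t ≤ ∫⁻ x, h x := by
  have h1t : (0:ℝ) < 1 - t := by linarith
  set F₀ := ⨆ x, f x with hF₀
  set G₀ := ⨆ x, g x with hG₀
  have hF₀t : F₀ ≠ ⊤ := (iSup_le hfF).trans_lt hFt.lt_top |>.ne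
  have hG₀t : G₀ ≠ ⊤ := (iSup_le hgG).trans_lt hGt.lt_top |>.ne
  have hCF0 : F₀ ^ (1 - t) ≠ 0 := by
    intro hc
    exact hF0 (by simpa [ENNReal.rpow_eq_zero_iff, hF₀t, h1t, not_lt.mpr h1t.le] using hc)
  have hCFt : F₀ ^ (1 - t) ≠ ⊤ := ENNReal.rpow_ne_top_of_nonneg h1t.le hF₀t
  have hCG0 : G₀ ^ t ≠ 0 := by
    intro hc
    exact hG0 (by simpa [ENNReal.rpow_eq_zero_iff, hG₀t, h0, not_lt.mpr h0.le] using hc)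
  have hCGt : G₀ ^ t ≠ ⊤ := ENNReal.rpow_ne_top_of_nonneg h0.le hG₀t
  set C := F₀ ^ (1 - t) * G₀ ^ t with hC
  have hC0 : C ≠ 0 := mul_ne_zero hCF0 hCG0
  have hCt : C ≠ ⊤ := ENNReal.mul_ne_top hCFt hCGt
  set f' := fun x => f x / F₀ with hf'
  set g' := fun x => g x / G₀ with hg'
  set h' := fun z => min (h z / C) 1 with hh'
  have hf'1 : ∀ x, f' x ≤ 1 := by
    intro x
    rw [hf']
    simp only
    rw [ENNReal.div_le_iff hF0 hF₀t, one_mul]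
    exact le_iSup f x
  have hg'1 : ∀ x, g' x ≤ 1 := by
    intro x
    rw [hg']
    simp only
    rw [ENNReal.div_le_iff hG0 hG₀t, one_mul]
    exact le_iSup g x
  have hf's : ⨆ x, f' x = 1 := by
    rw [hf']
    simp only
    rw [← ENNReal.iSup_div, ← hF₀, ENNReal.div_self hF0 hF₀t]
  have hg's : ⨆ x, g' x = 1 := by
    rw [hg']
    simp only
    rw [← ENNReal.iSup_div, ← hG₀, ENNReal.div_self hG0 hG₀t]
  have hyp' : ∀ x y, f' x ^ (1 - t) * g' y ^ t ≤ h' ((1 - t) * x + t * y) := by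
    intro x y
    have e : f' x ^ (1 - t) * g' y ^ t = f x ^ (1 - t) * g y ^ t / C := by
      rw [hf', hg']
      simp only
      rw [ENNReal.div_rpow_of_nonneg _ _ h1t.le, ENNReal.div_rpow_of_nonneg _ _ h0.le,
        div_mul_div_ennreal _ _ hCF0 hCFt hCG0 hCGt]
    rw [e, hh']
    refine le_min ?_ ?_
    · exact ENNReal.div_le_div_right (hyp x y) C
    · calc f x ^ (1 - t) * g y ^ t / C ≤ C / C := by
            refine ENNReal.div_le_div_right ?_ C
            rw [hC]
            exact mul_le_mul' (ENNReal.rpow_le_rpow (le_iSup f x) h1t.le)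
              (ENNReal.rpow_le_rpow (le_iSup g y) h0.le)
        _ ≤ 1 := by rw [ENNReal.div_self hC0 hCt]
  have main := PL1_aux h0 h1 f' g' h' (hf.div_const F₀) (hg.div_const G₀)
    ((hh.div_const C).min measurable_const) hf'1 hg'1 (fun z => min_le_right _ _)
    hf's hg's hyp'
  have hintf' : (∫⁻ x, f' x) = (∫⁻ x, f x) / F₀ := by
    rw [hf']
    simp only [div_eq_mul_inv]
    exact lintegral_mul_const' _ _ (by simp [hF0])
  have hintg' : (∫⁻ x, g' x) = (∫⁻ x, g x) / G₀ := by
    rw [hg']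
    simp only [div_eq_mul_inv]
    exact lintegral_mul_const' _ _ (by simp [hG0])
  have hinth' : (∫⁻ x, h' x) ≤ (∫⁻ x, h x) / C := by
    rw [hh']
    simp only [div_eq_mul_inv]
    rw [← lintegral_mul_const' _ _ (by simp [hC0] : C⁻¹ ≠ ⊤)]
    exact lintegral_mono fun z => min_le_left _ _
  have chain : (∫⁻ x, f' x) ^ (1 - t) * (∫⁻ x, g' x) ^ t ≤ (∫⁻ x, h x) / C := by
    calc (∫⁻ x, f' x) ^ (1 - t) * (∫⁻ x, g' x) ^ t
        ≤ ENNReal.ofReal (1 - t) * (∫⁻ x, f' x) + ENNReal.ofReal t * (∫⁻ x, g' x) :=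
          amgm2 h0.le h1.le _ _
      _ ≤ ∫⁻ x, h' x := main
      _ ≤ (∫⁻ x, h x) / C := hinth'
  have expand : (∫⁻ x, f' x) ^ (1 - t) * (∫⁻ x, g' x) ^ t
      = (∫⁻ x, f x) ^ (1 - t) * (∫⁻ x, g x) ^ t / C := by
    rw [hintf', hintg', ENNReal.div_rpow_of_nonneg _ _ h1t.le,
      ENNReal.div_rpow_of_nonneg _ _ h0.le, div_mul_div_ennreal _ _ hCF0 hCFt hCG0 hCGt]
  rw [expand] at chain
  calc (∫⁻ x, f x) ^ (1 - t) * (∫⁻ x, g x) ^ t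
      = (∫⁻ x, f x) ^ (1 - t) * (∫⁻ x, g x) ^ t / C * C := by
        rw [ENNReal.div_mul_cancel hC0 hCt]
    _ ≤ (∫⁻ x, h x) / C * C := mul_le_mul_left chain C
    _ = ∫⁻ x, h x := ENNReal.div_mul_cancel hC0 hCt

lemma PL_dim1 {t : ℝ} (h0 : 0 < t) (h1 : t < 1) (f g h : ℝ → ℝ≥0∞)
    (hf : Measurable f) (hg : Measurable g) (hh : Measurable h)
    (hyp : ∀ x y, f x ^ (1 - t) * g y ^ t ≤ h ((1 - t) * x + t * y)) :
    (∫⁻ x, f x) ^ (1 - t) * (∫⁻ x, g x) ^ t ≤ ∫⁻ x, h x := by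
  have h1t : (0:ℝ) < 1 - t := by linarith
  by_cases hf0 : (∫⁻ x, f x) = 0
  · rw [hf0, ENNReal.zero_rpow_of_pos h1t, zero_mul]
    exact zero_le
  by_cases hg0 : (∫⁻ x, g x) = 0
  · rw [hg0, ENNReal.zero_rpow_of_pos h0, mul_zero]
    exact zero_le
  -- pointwise positivity
  obtain ⟨x₀, hx₀⟩ : ∃ x, 0 < f x := by
    by_contra hcon
    push_neg at hcon
    exact hf0 (by simp [lintegral_eq_zero_iff hf, funext fun x => le_antisymm (hcon x) (zero_le)])
  obtain ⟨y₀, hy₀⟩ : ∃ y, 0 < g y := by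
    by_contra hcon
    push_neg at hcon
    exact hg0 (by simp [lintegral_eq_zero_iff hg, funext fun y => le_antisymm (hcon y) (zero_le)])
  set fk := fun (k : ℕ) (x : ℝ) => min (f x) ((k:ℝ≥0∞) + 1) with hfk
  set gk := fun (k : ℕ) (y : ℝ) => min (g y) ((k:ℝ≥0∞) + 1) with hgk
  have hmono_f : Monotone fun k => fk k := by
    intro k1 k2 hk x
    exact min_le_min le_rfl (by gcongr <;> exact_mod_cast hk)
  have hmono_g : Monotone fun k => gk k := by
    intro k1 k2 hk y
    exact min_le_min le_rfl (by gcongr <;> exact_mod_cast hk)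
  have hsup_f : ∀ x, (⨆ k, fk k x) = f x := by
    intro x
    refine le_antisymm (iSup_le fun k => min_le_left _ _) ?_
    rcases eq_or_ne (f x) ⊤ with hfx | hfx
    · have hconst : ∀ k : ℕ, fk k x = (k:ℝ≥0∞) + 1 := fun k => by
        rw [hfk]; simp [hfx]
      rw [hfx]
      calc (⊤:ℝ≥0∞) = ⨆ k : ℕ, ((k:ℝ≥0∞)) := ENNReal.iSup_natCast.symm
        _ ≤ ⨆ k : ℕ, fk k x := iSup_mono fun k => by rw [hconst k]; exact le_self_add
    · obtain ⟨k, hk⟩ := ENNReal.exists_nat_gt hfx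
      refine le_trans ?_ (le_iSup _ k)
      rw [hfk]
      simp only
      exact le_min le_rfl (hk.le.trans le_self_add)
  have hsup_g : ∀ y, (⨆ k, gk k y) = g y := by
    intro y
    refine le_antisymm (iSup_le fun k => min_le_left _ _) ?_
    rcases eq_or_ne (g y) ⊤ with hgy | hgy
    · have hconst : ∀ k : ℕ, gk k y = (k:ℝ≥0∞) + 1 := fun k => by
        rw [hgk]; simp [hgy]
      rw [hgy]
      calc (⊤:ℝ≥0∞) = ⨆ k : ℕ, ((k:ℝ≥0∞)) := ENNReal.iSup_natCast.symm
        _ ≤ ⨆ k : ℕ, gk k y := iSup_mono fun k => by rw [hconst k]; exact le_self_add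
    · obtain ⟨k, hk⟩ := ENNReal.exists_nat_gt hgy
      refine le_trans ?_ (le_iSup _ k)
      rw [hgk]
      simp only
      exact le_min le_rfl (hk.le.trans le_self_add)
  have hmeas_f : ∀ k : ℕ, Measurable (fk k) := fun k => hf.min measurable_const
  have hmeas_g : ∀ k : ℕ, Measurable (gk k) := fun k => hg.min measurable_const
  have hint_f : Filter.Tendsto (fun k => ∫⁻ x, fk k x) Filter.atTop (nhds (∫⁻ x, f x)) := by
    have he : (∫⁻ x, f x) = ⨆ k, ∫⁻ x, fk k x := by
      rw [← lintegral_iSup hmeas_f hmono_f]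
      exact lintegral_congr fun x => (hsup_f x).symm
    rw [he]
    exact tendsto_atTop_iSup fun k1 k2 hk => lintegral_mono (hmono_f hk)
  have hint_g : Filter.Tendsto (fun k => ∫⁻ y, gk k y) Filter.atTop (nhds (∫⁻ y, g y)) := by
    have he : (∫⁻ y, g y) = ⨆ k, ∫⁻ y, gk k y := by
      rw [← lintegral_iSup hmeas_g hmono_g]
      exact lintegral_congr fun y => (hsup_g y).symm
    rw [he]
    exact tendsto_atTop_iSup fun k1 k2 hk => lintegral_mono (hmono_g hk)
  have hperk : ∀ k : ℕ, ((∫⁻ x, fk k x) ^ (1 - t)) * ((∫⁻ y, gk k y) ^ t) ≤ ∫⁻ x, h x := by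
    intro k
    have hne1 : (⨆ x, fk k x) ≠ 0 := by
      refine ne_of_gt (lt_of_lt_of_le ?_ (le_iSup _ x₀))
      rw [hfk]
      simp only
      exact lt_min hx₀ (by exact lt_of_lt_of_le zero_lt_one le_add_self)
    have hne2 : (⨆ y, gk k y) ≠ 0 := by
      refine ne_of_gt (lt_of_lt_of_le ?_ (le_iSup _ y₀))
      rw [hgk]
      simp only
      exact lt_min hy₀ (by exact lt_of_lt_of_le zero_lt_one le_add_self)
    refine PL1_bounded h0 h1 (fk k) (gk k) h (hmeas_f k) (hmeas_g k) hh
      (F := (k:ℝ≥0∞) + 1) (G := (k:ℝ≥0∞) + 1)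
      (fun x => min_le_right _ _) (fun y => min_le_right _ _)
      (by simp) (by simp) hne1 hne2 ?_
    intro x y
    refine le_trans ?_ (hyp x y)
    exact mul_le_mul' (ENNReal.rpow_le_rpow (min_le_left _ _) h1t.le)
      (ENNReal.rpow_le_rpow (min_le_left _ _) h0.le)
  have hne1 : (∫⁻ x, f x) ^ (1 - t) ≠ 0 := by
    rw [Ne, ENNReal.rpow_eq_zero_iff, not_or]
    constructor
    · rintro ⟨hc, _⟩; exact hf0 hc
    · rintro ⟨_, hc⟩; linarith
  have hne2 : (∫⁻ y, g y) ^ t ≠ 0 := by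
    rw [Ne, ENNReal.rpow_eq_zero_iff, not_or]
    constructor
    · rintro ⟨hc, _⟩; exact hg0 hc
    · rintro ⟨_, hc⟩; linarith
  have hTf : Filter.Tendsto (fun k => (∫⁻ x, fk k x) ^ (1 - t)) Filter.atTop
      (nhds ((∫⁻ x, f x) ^ (1 - t))) :=
    (ENNReal.continuous_rpow_const.tendsto _).comp hint_f
  have hTg : Filter.Tendsto (fun k => (∫⁻ y, gk k y) ^ t) Filter.atTop
      (nhds ((∫⁻ y, g y) ^ t)) :=
    (ENNReal.continuous_rpow_const.tendsto _).comp hint_g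
  exact le_of_tendsto (ENNReal.Tendsto.mul hTf (Or.inl hne1) hTg (Or.inl hne2))
    (Filter.Eventually.of_forall hperk)

lemma insertNth_affine {d : ℕ} (a b c₁ c₂ : ℝ) (z w : Fin d → ℝ) :
    a • Fin.insertNth (α := fun _ : Fin (d+1) => ℝ) 0 c₁ z
        + b • Fin.insertNth (α := fun _ : Fin (d+1) => ℝ) 0 c₂ w
      = Fin.insertNth (α := fun _ : Fin (d+1) => ℝ) 0 (a * c₁ + b * c₂) (a • z + b • w) := by
  funext j
  refine Fin.cases ?_ ?_ j
  · simp [Fin.insertNth_apply_same]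
  · intro i
    have h : (0 : Fin (d+1)).succAbove i = i.succ := by
      simp [Fin.succAbove_zero]
    simp only [Pi.add_apply, Pi.smul_apply, smul_eq_mul, ← h,
      Fin.insertNth_apply_succAbove]

lemma PL_pi : ∀ (d : ℕ) {t : ℝ}, 0 < t → t < 1 → ∀ f g h : (Fin d → ℝ) → ℝ≥0∞,
    Measurable f → Measurable g → Measurable h →
    (∀ x y, f x ^ (1 - t) * g y ^ t ≤ h ((1 - t) • x + t • y)) →
    (∫⁻ x, f x) ^ (1 - t) * (∫⁻ x, g x) ^ t ≤ ∫⁻ x, h x := by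
  intro d
  induction d with
  | zero =>
    intro t h0 h1 f g h hf hg hh hyp
    have huniv : volume (univ : Set (Fin 0 → ℝ)) = 1 := by
      rw [MeasureTheory.volume_pi, Measure.pi_univ]
      simp
    have hconst : ∀ φ : (Fin 0 → ℝ) → ℝ≥0∞, (∫⁻ x, φ x) = φ (fun i => i.elim0) := by
      intro φ
      have hφc : φ = fun _ => φ (fun i => i.elim0) :=
        funext fun x => by congr 1; exact Subsingleton.elim _ _
      rw [hφc, lintegral_const, huniv, mul_one]
    rw [hconst f, hconst g, hconst h]
    refine le_trans (hyp (fun i => i.elim0) (fun i => i.elim0)) (le_of_eq ?_)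
    congr 1
    exact Subsingleton.elim _ _
  | succ d ih =>
    intro t h0 h1 f g h hf hg hh hyp
    have h1t : (0:ℝ) < 1 - t := by linarith
    set e := MeasurableEquiv.piFinSuccAbove (fun _ : Fin (d+1) => ℝ) 0 with he
    have mp : MeasurePreserving (⇑e) volume ((volume : Measure ℝ).prod
        (volume : Measure (Fin d → ℝ))) := by
      have hmp := measurePreserving_piFinSuccAbove
        (fun _ : Fin (d+1) => (volume : Measure ℝ)) 0
      have hv1 : (volume : Measure (Fin (d+1) → ℝ)) = Measure.pi fun _ => volume :=
        MeasureTheory.volume_pi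
      have hv2 : (volume : Measure (Fin d → ℝ)) = Measure.pi fun _ => volume :=
        MeasureTheory.volume_pi
      rw [hv1, hv2]
      exact hmp
    have hesymm : ∀ (c : ℝ) (z : Fin d → ℝ), e.symm (c, z) = Fin.insertNth 0 c z := by
      intro c z
      rw [he, MeasurableEquiv.piFinSuccAbove_symm_apply]
      rfl
    have key_eq : ∀ (c₁ c₂ : ℝ) (z w : Fin d → ℝ),
        (1 - t) • e.symm (c₁, z) + t • e.symm (c₂, w)
          = e.symm ((1 - t) * c₁ + t * c₂, (1 - t) • z + t • w) := by
      intro c₁ c₂ z w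
      rw [hesymm, hesymm, hesymm, insertNth_affine]
    -- integral decompositions
    have hint : ∀ φ : (Fin (d+1) → ℝ) → ℝ≥0∞, Measurable φ →
        (∫⁻ x, φ x) = ∫⁻ c : ℝ, ∫⁻ z : Fin d → ℝ, φ (e.symm (c, z)) := by
      intro φ hφ
      have h1' : (∫⁻ p, φ (e.symm p) ∂((volume : Measure ℝ).prod
          (volume : Measure (Fin d → ℝ)))) = ∫⁻ x, φ x :=
        (mp.symm e).lintegral_comp hφ
      rw [← h1']
      exact lintegral_prod (fun p => φ (e.symm p)) ((hφ.comp e.symm.measurable).aemeasurable)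
    have hmf : Measurable fun p : ℝ × (Fin d → ℝ) => f (e.symm p) := hf.comp e.symm.measurable
    have hmg : Measurable fun p : ℝ × (Fin d → ℝ) => g (e.symm p) := hg.comp e.symm.measurable
    have hmh : Measurable fun p : ℝ × (Fin d → ℝ) => h (e.symm p) := hh.comp e.symm.measurable
    set Ff := fun c : ℝ => ∫⁻ z : Fin d → ℝ, f (e.symm (c, z)) with hFf
    set Fg := fun c : ℝ => ∫⁻ z : Fin d → ℝ, g (e.symm (c, z)) with hFg
    set Fh := fun c : ℝ => ∫⁻ z : Fin d → ℝ, h (e.symm (c, z)) with hFh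
    have hFfm : Measurable Ff := hmf.lintegral_prod_right'
    have hFgm : Measurable Fg := hmg.lintegral_prod_right'
    have hFhm : Measurable Fh := hmh.lintegral_prod_right'
    have hyp1 : ∀ c₁ c₂ : ℝ, Ff c₁ ^ (1 - t) * Fg c₂ ^ t ≤ Fh ((1 - t) * c₁ + t * c₂) := by
      intro c₁ c₂
      refine ih h0 h1 (fun z => f (e.symm (c₁, z))) (fun w => g (e.symm (c₂, w)))
        (fun z => h (e.symm ((1 - t) * c₁ + t * c₂, z))) ?_ ?_ ?_ ?_
      · exact hf.comp (e.symm.measurable.comp measurable_prodMk_left)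
      · exact hg.comp (e.symm.measurable.comp measurable_prodMk_left)
      · exact hh.comp (e.symm.measurable.comp measurable_prodMk_left)
      · intro z w
        have := hyp (e.symm (c₁, z)) (e.symm (c₂, w))
        rwa [key_eq] at this
    rw [hint f hf, hint g hg, hint h hh]
    exact PL_dim1 h0 h1 Ff Fg Fh hFfm hFgm hFhm hyp1

lemma BM_half (d : ℕ) {A B : Set (Fin d → ℝ)} (hA : IsCompact A) (hB : IsCompact B)
    (hA0 : A.Nonempty) (hB0 : B.Nonempty) :
    volume A ^ ((1:ℝ)/2) * volume B ^ ((1:ℝ)/2)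
      ≤ volume ((2⁻¹ : ℝ) • A + (2⁻¹ : ℝ) • B) := by
  have hS : IsCompact ((2⁻¹ : ℝ) • A + (2⁻¹ : ℝ) • B) := (hA.smul _).add (hB.smul _)
  have ht0 : (0:ℝ) < 1/2 := by norm_num
  have ht1 : (1:ℝ)/2 < 1 := by norm_num
  have key := PL_pi d ht0 ht1 (A.indicator fun _ => (1:ℝ≥0∞)) (B.indicator fun _ => (1:ℝ≥0∞))
    (((2⁻¹ : ℝ) • A + (2⁻¹ : ℝ) • B).indicator fun _ => (1:ℝ≥0∞))
    ((measurable_const.indicator hA.measurableSet))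
    ((measurable_const.indicator hB.measurableSet))
    ((measurable_const.indicator hS.measurableSet)) ?_
  · have e1 : (∫⁻ x, A.indicator (fun _ => (1:ℝ≥0∞)) x) = volume A :=
      lintegral_indicator_one hA.measurableSet
    have e2 : (∫⁻ x, B.indicator (fun _ => (1:ℝ≥0∞)) x) = volume B :=
      lintegral_indicator_one hB.measurableSet
    have e3 : (∫⁻ x, ((2⁻¹ : ℝ) • A + (2⁻¹ : ℝ) • B).indicator (fun _ => (1:ℝ≥0∞)) x)
        = volume ((2⁻¹ : ℝ) • A + (2⁻¹ : ℝ) • B) :=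
      lintegral_indicator_one hS.measurableSet
    rw [e1, e2, e3] at key
    have : (1:ℝ) - 1/2 = 1/2 := by norm_num
    rw [this] at key
    exact key
  · intro x y
    by_cases hx : x ∈ A
    · by_cases hy : y ∈ B
      · have hmem : (1 - 1/2 : ℝ) • x + (1/2 : ℝ) • y
            ∈ (2⁻¹ : ℝ) • A + (2⁻¹ : ℝ) • B := by
          have h2 : (1 - 1/2 : ℝ) = 2⁻¹ := by norm_num
          rw [h2, show (1/2 : ℝ) = 2⁻¹ by norm_num]
          exact Set.add_mem_add (Set.smul_mem_smul_set hx) (Set.smul_mem_smul_set hy)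
        rw [Set.indicator_of_mem hx, Set.indicator_of_mem hy, Set.indicator_of_mem hmem]
        simp [ENNReal.one_rpow]
      · rw [Set.indicator_of_notMem hy, ENNReal.zero_rpow_of_pos ht0, mul_zero]
        exact zero_le
    · rw [Set.indicator_of_notMem hx,
        ENNReal.zero_rpow_of_pos (by norm_num : (0:ℝ) < 1 - 1/2), zero_mul]
      exact zero_le

lemma isodiam (d : ℕ) (s : Set (EuclideanSpace ℝ (Fin d))) (hs : s.Nonempty)
    (hd : Metric.ediam s ≠ ⊤) :
    volume s ≤ ENNReal.ofReal ((Metric.diam s / 2) ^ d)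
      * volume (Metric.ball (0 : EuclideanSpace ℝ (Fin d)) 1) := by
  set C := closure s with hC
  have hCb : Bornology.IsBounded C := (Metric.isBounded_iff_ediam_ne_top.2 hd).closure
  have hCc : IsCompact C := Metric.isCompact_of_isClosed_isBounded isClosed_closure hCb
  have hC0 : C.Nonempty := hs.closure
  set e := (MeasurableEquiv.toLp 2 (Fin d → ℝ)).symm with he
  have hecont : Continuous ⇑e := by
    rw [he]
    exact PiLp.continuous_ofLp 2 _
  have mp : MeasurePreserving ⇑e volume volume :=
    EuclideanSpace.volume_preserving_symm_measurableEquiv_toLp (Fin d)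
  set C' : Set (Fin d → ℝ) := ⇑e '' C with hC'
  have hC'c : IsCompact C' := hCc.image hecont
  have hC'0 : C'.Nonempty := hC0.image _
  have hvolC : volume C' = volume C := by
    rw [hC', MeasurableEquiv.image_eq_preimage_symm]
    exact (mp.symm e).measure_preimage hCc.measurableSet.nullMeasurableSet
  set D' : Set (Fin d → ℝ) := (2⁻¹ : ℝ) • C' + (2⁻¹ : ℝ) • (-C') with hD'
  have hD'c : IsCompact D' := (hC'c.smul _).add (hC'c.neg.smul _)
  have hBM : volume C' ≤ volume D' := by
    have hneg : volume (-C') = volume C' := Measure.measure_neg _ _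
    have := BM_half d hC'c hC'c.neg hC'0 hC'0.neg
    rw [hneg] at this
    rcases eq_or_ne (volume C') 0 with hz | hz
    · rw [hz]; exact zero_le
    · have hft : volume C' ≠ ⊤ := hC'c.measure_lt_top.ne
      rwa [← ENNReal.rpow_add _ _ hz hft, show (1:ℝ)/2 + 1/2 = 1 by norm_num,
        ENNReal.rpow_one] at this
  have hpull : volume D' = volume (⇑e ⁻¹' D') :=
    (mp.measure_preimage hD'c.measurableSet.nullMeasurableSet).symm
  have hsub : ⇑e ⁻¹' D' ⊆ Metric.closedBall (0 : EuclideanSpace ℝ (Fin d))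
      (Metric.diam s / 2) := by
    intro v hv
    obtain ⟨p, hp, q, hq, hpq⟩ := hv
    obtain ⟨u, hu, rfl⟩ := hp
    obtain ⟨w, hw, rfl⟩ := hq
    have hw' : -w ∈ C' := Set.mem_neg.mp hw
    obtain ⟨x, hx, hux⟩ := hu
    obtain ⟨y, hy, hwy⟩ := hw'
    have hwneg : w = -(⇑e y) := by rw [hwy, neg_neg]
    have hveq : v = (2⁻¹ : ℝ) • (x - y) := by
      apply e.injective
      rw [← hpq, ← hux, hwneg]
      show (2⁻¹ : ℝ) • WithLp.ofLp x + (2⁻¹ : ℝ) • -(WithLp.ofLp y) = WithLp.ofLp ((2⁻¹ : ℝ) • (x - y))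
      rw [WithLp.ofLp_smul, WithLp.ofLp_sub]
      module
    rw [mem_closedBall_zero_iff, hveq, norm_smul]
    have hdist : ‖x - y‖ ≤ Metric.diam C := by
      rw [← dist_eq_norm]
      exact Metric.dist_le_diam_of_mem hCb hx hy
    have : Metric.diam C = Metric.diam s := by rw [hC, Metric.diam_closure]
    rw [this] at hdist
    rw [norm_inv, Real.norm_ofNat]
    calc (2:ℝ)⁻¹ * ‖x - y‖ ≤ 2⁻¹ * Metric.diam s := by
          exact mul_le_mul_of_nonneg_left hdist (by norm_num)
      _ = Metric.diam s / 2 := by ring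
  have hball : volume (Metric.closedBall (0 : EuclideanSpace ℝ (Fin d)) (Metric.diam s / 2))
      = ENNReal.ofReal ((Metric.diam s / 2) ^ d)
        * volume (Metric.ball (0 : EuclideanSpace ℝ (Fin d)) 1) := by
    rw [Measure.addHaar_closedBall _ _ (by positivity), finrank_euclideanSpace_fin]
  calc volume s ≤ volume C := measure_mono subset_closure
    _ = volume C' := hvolC.symm
    _ ≤ volume D' := hBM
    _ = volume (⇑e ⁻¹' D') := hpull
    _ ≤ volume (Metric.closedBall (0 : EuclideanSpace ℝ (Fin d)) (Metric.diam s / 2)) :=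
        measure_mono hsub
    _ = _ := hball

lemma hausdorff_ball (d : ℕ) (hd : 0 < d) :
    (2:ℝ≥0∞) ^ d ≤ μH[(d:ℝ)] (Metric.closedBall (0 : EuclideanSpace ℝ (Fin d)) 1) := by
  set vB := volume (Metric.ball (0 : EuclideanSpace ℝ (Fin d)) 1) with hvB
  have hvB0 : vB ≠ 0 := (Metric.measure_ball_pos _ _ one_pos).ne'
  have hvBt : vB ≠ ⊤ := measure_ball_lt_top.ne
  have key : (((2:ℝ≥0∞) ^ d / vB) • (volume : Measure (EuclideanSpace ℝ (Fin d))))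
      ≤ μH[(d:ℝ)] := by
    refine Measure.le_hausdorffMeasure _ _ ⊤ (by simp) ?_
    intro s _
    rcases eq_or_ne (Metric.ediam s) ⊤ with hds | hds
    · rw [hds, ENNReal.top_rpow_of_pos (by exact_mod_cast hd)]
      exact le_top
    rcases Set.eq_empty_or_nonempty s with rfl | hsne
    · simp
    have hiso := isodiam d s hsne hds
    rcases eq_or_ne (Metric.ediam s) 0 with hds0 | hds0
    · have hD0 : Metric.diam s = 0 := by rw [Metric.diam, hds0]; simp
      have hvs : volume s = 0 := by
        refine le_antisymm ?_ (zero_le)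
        refine le_trans hiso (le_of_eq ?_)
        rw [hD0]
        rw [zero_div, zero_pow hd.ne', ENNReal.ofReal_zero, zero_mul]
      simp [Measure.smul_apply, hvs]
    have hDpos : 0 < Metric.diam s := by
      rw [Metric.diam, ENNReal.toReal_pos_iff]
      exact ⟨pos_iff_ne_zero.mpr hds0, hds.lt_top⟩
    set D := Metric.diam s with hDdef
    rw [Measure.smul_apply, smul_eq_mul]
    calc (2:ℝ≥0∞) ^ d / vB * volume s
        ≤ (2:ℝ≥0∞) ^ d / vB * (ENNReal.ofReal ((D / 2) ^ d) * vB) :=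
          mul_le_mul_right hiso _
      _ = (2:ℝ≥0∞) ^ d * ENNReal.ofReal ((D / 2) ^ d) * (vB⁻¹ * vB) := by
          rw [div_eq_mul_inv]; ring
      _ = (2:ℝ≥0∞) ^ d * ENNReal.ofReal ((D / 2) ^ d) := by
          rw [ENNReal.inv_mul_cancel hvB0 hvBt, mul_one]
      _ = ENNReal.ofReal (D ^ d) := by
          rw [show (2:ℝ≥0∞) = ENNReal.ofReal 2 by simp,
            ← ENNReal.ofReal_pow (by norm_num : (0:ℝ) ≤ 2),
            ← ENNReal.ofReal_mul (by positivity), ← mul_pow]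
          congr 2
          field_simp
      _ = Metric.ediam s ^ (d:ℝ) := by
          rw [← Real.rpow_natCast D d, ← ENNReal.ofReal_rpow_of_pos hDpos,
            hDdef, Metric.diam, ENNReal.ofReal_toReal hds]
  have h1 : (((2:ℝ≥0∞) ^ d / vB) • (volume : Measure (EuclideanSpace ℝ (Fin d))))
      (Metric.closedBall (0 : EuclideanSpace ℝ (Fin d)) 1)
      ≤ μH[(d:ℝ)] (Metric.closedBall (0 : EuclideanSpace ℝ (Fin d)) 1) := key _
  refine le_trans ?_ h1
  rw [Measure.smul_apply, smul_eq_mul]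
  calc (2:ℝ≥0∞) ^ d = (2:ℝ≥0∞) ^ d / vB * vB := (ENNReal.div_mul_cancel hvB0 hvBt).symm
    _ ≤ (2:ℝ≥0∞) ^ d / vB * volume (Metric.closedBall (0:EuclideanSpace ℝ (Fin d)) 1) :=
        mul_le_mul_right (measure_mono Metric.ball_subset_closedBall) _
end AuxPL

lemma euclidean_abs_coord_le {n : ℕ} (x : EuclideanSpace ℝ (Fin n)) (i : Fin n) :
    |x i| ≤ ‖x‖ := by
  rw [← Real.sqrt_sq_eq_abs, EuclideanSpace.norm_eq]
  apply Real.sqrt_le_sqrt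
  have : x i ^ 2 = ‖x i‖ ^ 2 := by rw [Real.norm_eq_abs, sq_abs]
  rw [this]
  exact Finset.single_le_sum (fun j _ => sq_nonneg ‖x j‖) (Finset.mem_univ i)

theorem stmt_15' {m n : ℕ} (hm : 1 ≤ m) (hmn : m < n)
    (A : Matrix (Fin m) (Fin n) ℤ) (hA : regular A) :
    {x : Fin n → ℝ | (∀ i, |x i| ≤ 1) ∧ (Rmat A).mulVec x = 0} ⊆
        (fun x => x - fun _ => (1 : ℝ)) '' knap A (vA A) ∧
      μH[((n : ℝ) - m)] (⇑(EuclideanSpace.equiv (Fin n) ℝ).symm '' knap A (vA A)) ≥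
        2 ^ (n - m) := by
  constructor
  · -- Part 1: cube section is contained in the translated polytope
    rintro x ⟨hx1, hx2⟩
    refine ⟨x + fun _ => 1, ⟨?_, ?_⟩, ?_⟩
    · intro i
      have h := abs_le.mp (hx1 i)
      simp only [Pi.add_apply]
      linarith [h.1]
    · rw [Matrix.mulVec_add, hx2, zero_add]
      rfl
    · funext i; simp
  · -- Part 2: volume lower bound
    set d := n - m with hd
    have hd1 : 0 < d := by omega
    have hcast : ((n : ℝ) - m) = ((d : ℕ) : ℝ) := by
      rw [hd, Nat.cast_sub hmn.le]
    rw [hcast]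
    -- the kernel as a submodule of Euclidean space
    set φ := EuclideanSpace.equiv (Fin n) ℝ with hφ
    set L := Matrix.mulVecLin (Rmat A) with hL
    set T : EuclideanSpace ℝ (Fin n) →ₗ[ℝ] (Fin m → ℝ) :=
      L.comp (φ.toLinearEquiv : EuclideanSpace ℝ (Fin n) →ₗ[ℝ] (Fin n → ℝ)) with hT
    set K := LinearMap.ker T with hK
    have hrank : d ≤ Module.finrank ℝ K := by
      have h1 := LinearMap.finrank_range_add_finrank_ker T
      have h2 : Module.finrank ℝ (LinearMap.range T) ≤ m := by
        refine le_trans (Submodule.finrank_le _) ?_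
        simp [Module.finrank_fintype_fun_eq_card]
      have h3 : Module.finrank ℝ (EuclideanSpace ℝ (Fin n)) = n := finrank_euclideanSpace_fin
      rw [← hK, h3] at h1
      omega
    -- orthonormal family of d vectors inside the kernel
    set b := stdOrthonormalBasis ℝ K with hb
    set u : Fin d → EuclideanSpace ℝ (Fin n) :=
      fun i => (b (Fin.castLE hrank i) : EuclideanSpace ℝ (Fin n)) with hu
    have hu_mem : ∀ i, u i ∈ K := fun i => SetLike.coe_mem _
    have hu_on : Orthonormal ℝ u := by
      rw [orthonormal_iff_ite]
      intro i j
      have h := orthonormal_iff_ite.mp b.orthonormal (Fin.castLE hrank i) (Fin.castLE hrank j)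
      rw [Submodule.coe_inner] at h
      rw [hu]
      simp only
      by_cases hij : i = j
      · rw [h, if_pos (by rw [hij]), if_pos hij]
      · rw [h, if_neg (fun hc => hij (Fin.castLE_inj.mp hc)), if_neg hij]
    -- the linear parametrization
    set S : EuclideanSpace ℝ (Fin d) → EuclideanSpace ℝ (Fin n) :=
      fun y => ∑ i, y i • u i with hS
    have hSsub : ∀ y z : EuclideanSpace ℝ (Fin d), S (y - z) = S y - S z := by
      intro y z
      rw [hS]
      simp only
      rw [← Finset.sum_sub_distrib]
      refine Finset.sum_congr rfl fun i _ => ?_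
      have : (y - z) i = y i - z i := rfl
      rw [this, sub_smul]
    have hSnorm : ∀ y : EuclideanSpace ℝ (Fin d), ‖S y‖ = ‖y‖ := by
      intro y
      have hinner : (inner ℝ (S y) (S y) : ℝ) = ∑ i, y i * y i := by
        rw [hS]
        simp only
        rw [sum_inner]
        refine Finset.sum_congr rfl fun i _ => ?_
        rw [real_inner_smul_left, hu_on.inner_right_fintype]
      have hsq : ‖S y‖ ^ 2 = ‖y‖ ^ 2 := by
        rw [← real_inner_self_eq_norm_sq, hinner, EuclideanSpace.norm_eq,
          Real.sq_sqrt (by positivity)]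
        exact Finset.sum_congr rfl fun i _ => by rw [Real.norm_eq_abs, sq_abs, sq]
      calc ‖S y‖ = Real.sqrt (‖S y‖ ^ 2) := (Real.sqrt_sq (norm_nonneg _)).symm
        _ = Real.sqrt (‖y‖ ^ 2) := by rw [hsq]
        _ = ‖y‖ := Real.sqrt_sq (norm_nonneg _)
    have hS_mem : ∀ y : EuclideanSpace ℝ (Fin d), S y ∈ K := by
      intro y
      rw [hS]
      exact Submodule.sum_smul_mem K _ fun i _ => hu_mem i
    -- the isometric affine embedding
    set c : EuclideanSpace ℝ (Fin n) := φ.symm (fun _ => 1) with hc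
    set g : EuclideanSpace ℝ (Fin d) → EuclideanSpace ℝ (Fin n) :=
      fun y => c + S y with hg
    have hgiso : Isometry g := by
      refine Isometry.of_dist_eq fun y z => ?_
      rw [hg]
      simp only
      rw [dist_add_left, dist_eq_norm, ← hSsub, hSnorm, ← dist_eq_norm]
    -- image of the unit ball lies in the image of the knapsack polytope
    have hsubset : g '' Metric.closedBall (0 : EuclideanSpace ℝ (Fin d)) 1
        ⊆ ⇑(EuclideanSpace.equiv (Fin n) ℝ).symm '' knap A (vA A) := by
      rintro _ ⟨y, hy, rfl⟩
      have hnorm1 : ‖S y‖ ≤ 1 := by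
        rw [hSnorm]
        exact mem_closedBall_zero_iff.mp hy
      set w : Fin n → ℝ := (fun _ => 1) + φ (S y) with hw
      refine ⟨w, ⟨?_, ?_⟩, ?_⟩
      · intro i
        have habs : |(φ (S y)) i| ≤ 1 := by
          have h1 : (φ (S y)) i = (S y) i := rfl
          rw [h1]
          exact le_trans (euclidean_abs_coord_le (S y) i) hnorm1
        have := (abs_le.mp habs).1
        have hwi : w i = 1 + (φ (S y)) i := rfl
        rw [hwi]
        linarith
      · rw [hw, Matrix.mulVec_add]
        have hker : (Rmat A).mulVec (φ (S y)) = 0 := by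
          have h1 : T (S y) = 0 := LinearMap.mem_ker.mp (hS_mem y)
          rw [hT] at h1
          simpa [hL, Matrix.mulVecLin_apply] using h1
        rw [hker, add_zero]
        rfl
      · rw [hw, hg]
        simp only
        rw [map_add, ContinuousLinearEquiv.symm_apply_apply]
    -- conclude via the Hausdorff measure of the ball
    have hball := hausdorff_ball d hd1
    calc (2:ℝ≥0∞) ^ d
        ≤ μH[(d:ℝ)] (Metric.closedBall (0 : EuclideanSpace ℝ (Fin d)) 1) := hball
      _ = μH[(d:ℝ)] (g '' Metric.closedBall (0 : EuclideanSpace ℝ (Fin d)) 1) :=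
          (hgiso.hausdorffMeasure_image (Or.inl (by positivity)) _).symm
      _ ≤ μH[(d:ℝ)] (⇑(EuclideanSpace.equiv (Fin n) ℝ).symm '' knap A (vA A)) :=
          measure_mono hsubset

end AuxAll

open MeasureTheory in
/-- P(A,v) − 1 contains the central cube section [−1,1]ⁿ ∩ ker A, and hence the
(n−m)-dimensional volume (Hausdorff measure in the Euclidean metric) of P(A,v)
is at least 2^(n−m). -/
theorem stmt_15 {m n : ℕ} (hm : 1 ≤ m) (hmn : m < n)
    (A : Matrix (Fin m) (Fin n) ℤ) (hA : regular A) :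
    {x : Fin n → ℝ | (∀ i, |x i| ≤ 1) ∧ (Rmat A).mulVec x = 0} ⊆
        (fun x => x - fun _ => (1 : ℝ)) '' knap A (vA A) ∧
      μH[((n : ℝ) - m)] (⇑(EuclideanSpace.equiv (Fin n) ℝ).symm '' knap A (vA A)) ≥
        2 ^ (n - m) := stmt_15' hm hmn A hA

end
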